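/- Let K ⊆ L be languages over Σ and Σ_c ⊆ Σ. For each σ ∈ Σ_c define L_σ = { s ∈ K | s ++ [σ] ∈ L } and K_σ = { s ∈ K | s ++ [σ] ∈ K }. Then a family of controllers (f_1^σ,…,f_n^σ) and fusion rules f^σ (σ ∈ Σ_c) solves the control problem Con(L, K, (Σ_io), Σ_c) if and only if for every σ ∈ Σ_c, the observers (f_1^σ,…,f_n^σ) together with the fusion rule f^σ solve the observation problem Obs(f^σ, L_σ, K_σ, (Σ_io)). (Reduction of control problems to observation problems, Theorem 5.) -/
import Mathlib


open List

/-- Natural projection onto a subalphabet: keep only symbols in `A`. -/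
def natProj {α : Type*} (A : Set α) [DecidablePred (· ∈ A)] (s : List α) : List α :=
  s.filter (fun a => decide (a ∈ A))

/-- Observers `obs` together with fusion rule `f` solve the observation problem
`Obs(f, L, K, (Sio i))`. -/
def SolvesObs {α : Type*} {n : ℕ} {V : Fin n → Type*} (f : (∀ i, V i) → Bool)
    (obs : ∀ i, List α → V i) (L K : Set (List α))
    (Sio : Fin n → Set α) [∀ i, DecidablePred (· ∈ Sio i)] : Prop :=
  ∀ s ∈ L,
    (s ∈ K → f (fun i => obs i (natProj (Sio i) s)) = true) ∧
    (s ∈ L \ K → f (fun i => obs i (natProj (Sio i) s)) = false)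

/-- `s` is positive (contains the fault event `σf`) for at least `m` steps. -/
def PosSteps {α : Type*} (σf : α) (m : ℕ) (s : List α) : Prop :=
  ∃ π τ : List α, s = π ++ [σf] ++ τ ∧ m ≤ τ.length

/-- Observers `obs` together with fusion rule `f` solve the diagnosis problem
`Dx(f, L, (Sio i), σf, m)`. -/
def SolvesDx {α : Type*} {n : ℕ} {V : Fin n → Type*} (f : (∀ i, V i) → Bool)
    (obs : ∀ i, List α → V i) (L : Set (List α))
    (Sio : Fin n → Set α) [∀ i, DecidablePred (· ∈ Sio i)]
    (σf : α) (m : ℕ) : Prop :=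
  ∀ s ∈ L,
    (PosSteps σf m s → f (fun i => obs i (natProj (Sio i) s)) = true) ∧
    (σf ∉ s → f (fun i => obs i (natProj (Sio i) s)) = false)

/-- Controllers `con σ` together with fusion rules `fus σ`, for `σ ∈ Sc`, solve the
control problem `Con(L, K, (Sio i), Sc)`. -/
def SolvesCon {α : Type*} {n : ℕ} {V : Fin n → Type*} (fus : α → (∀ i, V i) → Bool)
    (con : α → ∀ i, List α → V i) (L K : Set (List α))
    (Sio : Fin n → Set α) [∀ i, DecidablePred (· ∈ Sio i)] (Sc : Set α) : Prop :=
  ∀ σ ∈ Sc, ∀ s ∈ K,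
    (s ++ [σ] ∈ K → fus σ (fun i => con σ i (natProj (Sio i) s)) = true) ∧
    (s ++ [σ] ∈ L \ K → fus σ (fun i => con σ i (natProj (Sio i) s)) = false)

/-- Prefix closure of a language. -/
def pr {α : Type*} (M : Set (List α)) : Set (List α) := {s | ∃ t ∈ M, s <+: t}

/-- `Mγ`: every string of `M` extended by the symbol `γ`. -/
def catSym {α : Type*} (M : Set (List α)) (γ : α) : Set (List α) :=
  {t | ∃ s ∈ M, t = s ++ [γ]}

/-- **Theorem 5 (Con ≤ Obs).** A family of controllers and fusion rules solves
`Con(L, K, (Sio i), Sc)` iff for every `σ ∈ Sc` the corresponding observers and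
fusion rule solve `Obs(fus σ, Lσ, Kσ, (Sio i))`, where `Lσ = { s ∈ K | s ++ [σ] ∈ L }`
and `Kσ = { s ∈ K | s ++ [σ] ∈ K }`. -/
theorem con_to_obs {α : Type*} {n : ℕ} {V : Fin n → Type*}
    (L K : Set (List α)) (hKL : K ⊆ L)
    (Sio : Fin n → Set α) [∀ i, DecidablePred (· ∈ Sio i)]
    (Sc : Set α)
    (fus : α → (∀ i, V i) → Bool) (con : α → ∀ i, List α → V i) :
    SolvesCon fus con L K Sio Sc ↔
      ∀ σ ∈ Sc,
        SolvesObs (fus σ) (con σ)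
          {s ∈ K | s ++ [σ] ∈ L} {s ∈ K | s ++ [σ] ∈ K} Sio := by
  
  constructor
  · intro h σ hσ s hs
    obtain ⟨hsK, hsL⟩ := hs
    obtain ⟨h1, h2⟩ := h σ hσ s hsK
    refine ⟨fun hk => h1 hk.2, fun hk => h2 ⟨hsL, ?_⟩⟩
    intro hc
    exact hk.2 ⟨hsK, hc⟩
  · intro h σ hσ s hs
    constructor
    · intro hk
      exact (h σ hσ s ⟨hs, hKL hk⟩).1 ⟨hs, hk⟩
    · intro hk
      exact (h σ hσ s ⟨hs, hk.1⟩).2 ⟨⟨hs, hk.1⟩, fun hc => hk.2 hc.2⟩
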